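/- Let W be a family of subgroups of a group G acting on a tree T, indexed by the cells of a connected graph, such that adjacent cells have subgroups each preserving a common line and each containing a hyperbolic element. Then all the subgroups preserve one common line of T; in particular the subgroup generated by all of them preserves a line of T. -/

import Mathlib

/-- A (bi-infinite geodesic) line in a graph: an injective `ℤ`-indexed sequence
of consecutively adjacent vertices. -/
def IsLine {V : Type*} (T : SimpleGraph V) (L : ℤ → V) : Prop :=
  Function.Injective L ∧ ∀ n : ℤ, T.Adj (L n) (L (n + 1))

/-- `g` preserves the line `L` setwise. -/
def PreservesLine {V G : Type*} [Group G] [MulAction G V] (g : G) (L : ℤ → V) : Prop :=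
  (g • ·) '' Set.range L = Set.range L

namespace StmtSix

open SimpleGraph Walk

variable {V : Type*} {T : SimpleGraph V}

/-- The walk along a line from `L i` forward `n` steps. -/
def lineWalk (L : ℤ → V) (hL : ∀ n : ℤ, T.Adj (L n) (L (n + 1))) (i : ℤ) :
    (n : ℕ) → T.Walk (L i) (L (i + n))
  | 0 => Walk.nil.copy rfl (by norm_num)
  | (n + 1) => (Walk.cons (hL i) (lineWalk L hL (i + 1) n)).copy rfl
      (by congr 1; push_cast; ring)

lemma lineWalk_length (L : ℤ → V) (hL : ∀ n : ℤ, T.Adj (L n) (L (n + 1))) (i : ℤ) :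
    ∀ n : ℕ, (lineWalk L hL i n).length = n
  | 0 => by simp [lineWalk]
  | (n + 1) => by simp [lineWalk, lineWalk_length L hL (i + 1) n]

lemma lineWalk_support (L : ℤ → V) (hL : ∀ n : ℤ, T.Adj (L n) (L (n + 1))) (i : ℤ) :
    ∀ (n : ℕ) (v : V), v ∈ (lineWalk L hL i n).support → ∃ t : ℕ, t ≤ n ∧ v = L (i + t)
  | 0, v => by
    simp only [lineWalk, support_copy, support_nil, List.mem_singleton]
    rintro rfl
    exact ⟨0, le_rfl, by norm_num⟩
  | (n + 1), v => by
    simp only [lineWalk, support_copy, support_cons, List.mem_cons]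
    rintro (rfl | hv)
    · exact ⟨0, by omega, by norm_num⟩
    · obtain ⟨t, ht, rfl⟩ := lineWalk_support L hL (i + 1) n v hv
      exact ⟨t + 1, by omega, by congr 1; push_cast; ring⟩

lemma lineWalk_isPath (L : ℤ → V) (hinj : Function.Injective L)
    (hL : ∀ n : ℤ, T.Adj (L n) (L (n + 1))) (i : ℤ) :
    ∀ n : ℕ, (lineWalk L hL i n).IsPath
  | 0 => by simp [lineWalk]
  | (n + 1) => by
    simp only [lineWalk, isPath_copy, cons_isPath_iff]
    refine ⟨lineWalk_isPath L hinj hL (i + 1) n, fun hmem => ?_⟩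
    obtain ⟨t, _, het⟩ := lineWalk_support L hL (i + 1) n _ hmem
    have := hinj het
    omega

/-- The path along a line from `L i` to `L j`. -/
noncomputable def seg (L : ℤ → V) (hL : ∀ n : ℤ, T.Adj (L n) (L (n + 1))) (i j : ℤ) :
    T.Walk (L i) (L j) :=
  if h : i ≤ j then
    (lineWalk L hL i (j - i).toNat).copy rfl (by congr 1; omega)
  else
    ((lineWalk L hL j (i - j).toNat).copy rfl (by congr 1; omega)).reverse

lemma seg_length (L : ℤ → V) (hL : ∀ n : ℤ, T.Adj (L n) (L (n + 1))) (i j : ℤ) :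
    (seg L hL i j).length = (j - i).natAbs := by
  unfold seg
  split_ifs with h
  · simp [lineWalk_length]; omega
  · simp [lineWalk_length]; omega

lemma seg_support (L : ℤ → V) (hL : ∀ n : ℤ, T.Adj (L n) (L (n + 1))) (i j : ℤ) :
    ∀ v ∈ (seg L hL i j).support, v ∈ Set.range L := by
  intro v hv
  unfold seg at hv
  split_ifs at hv with h
  · simp only [support_copy] at hv
    obtain ⟨t, _, rfl⟩ := lineWalk_support L hL i _ v hv
    exact ⟨_, rfl⟩
  · simp only [support_reverse, support_copy, List.mem_reverse] at hv
    obtain ⟨t, _, rfl⟩ := lineWalk_support L hL j _ v hv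
    exact ⟨_, rfl⟩

lemma seg_isPath (L : ℤ → V) (hinj : Function.Injective L)
    (hL : ∀ n : ℤ, T.Adj (L n) (L (n + 1))) (i j : ℤ) :
    (seg L hL i j).IsPath := by
  unfold seg
  split_ifs with h
  · simpa using lineWalk_isPath L hinj hL i _
  · exact ((isPath_copy _ _ _).2 (lineWalk_isPath L hinj hL j _)).reverse

/-- Two paths between the same vertices of an acyclic graph are equal. -/
lemma path_eq (hT : T.IsAcyclic) {u v : V} {p q : T.Walk u v}
    (hp : p.IsPath) (hq : q.IsPath) : p = q := by
  have := (SimpleGraph.isAcyclic_iff_path_unique.1 hT) (⟨p, hp⟩ : T.Path u v) ⟨q, hq⟩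
  exact congrArg Subtype.val this

/-- In a tree, two vertices on a line are adjacent only if they are consecutive. -/
lemma adj_line (hT : T.IsAcyclic) {L : ℤ → V} (hL : IsLine T L)
    {i j : ℤ} (hij : T.Adj (L i) (L j)) : j = i + 1 ∨ j = i - 1 := by
  have hne : i ≠ j := fun h => hij.ne (by rw [h])
  have hp1 : (Walk.cons hij Walk.nil : T.Walk (L i) (L j)).IsPath := by
    simp [hij.ne]
  have := path_eq hT hp1 (seg_isPath L hL.1 hL.2 i j)
  have hlen : (Walk.cons hij (Walk.nil : T.Walk (L j) (L j))).length = (j - i).natAbs := by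
    rw [this, seg_length]
  simp only [length_cons, length_nil] at hlen
  omega

/-- Appending two paths meeting only at the junction vertex gives a path. -/
lemma isPath_append {u v w : V} {p : T.Walk u v} {q : T.Walk v w}
    (hp : p.IsPath) (hq : q.IsPath)
    (h : ∀ x ∈ p.support, x ∈ q.support → x = v) : (p.append q).IsPath := by
  rw [isPath_def, support_append]
  refine List.Nodup.append hp.support_nodup (hq.support_nodup.tail) ?_
  intro x hx1 hx2
  have hxq : x ∈ q.support := List.mem_of_mem_tail hx2
  have hxv := h x hx1 hxq
  rw [hxv] at hx2
  have hqs : q.support = v :: q.support.tail := support_eq_cons q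
  have hnd := hq.support_nodup
  rw [hqs] at hnd
  exact (List.nodup_cons.1 hnd).1 hx2

variable {G : Type*} [Group G] [MulAction G V]

/-- The graph homomorphism given by the action of `g`. -/
def ghom (hadj : ∀ (g : G) (u v : V), T.Adj u v → T.Adj (g • u) (g • v)) (g : G) :
    T →g T := ⟨fun v => g • v, fun h => hadj g _ _ h⟩

lemma range_mem_of_preserves {g : G} {L : ℤ → V} (h : PreservesLine g L) (n : ℤ) :
    g • L n ∈ Set.range L := by
  rw [← h]; exact ⟨L n, ⟨n, rfl⟩, rfl⟩

/-- A fixed-point-free, non-inverting automorphism preserving a line acts on it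
as a nontrivial translation. -/
lemma exists_translation (hT : T.IsAcyclic)
    (hadj : ∀ (g : G) (u v : V), T.Adj u v → T.Adj (g • u) (g • v))
    (hninv : ∀ (g : G) (u v : V), T.Adj u v → ¬(g • u = v ∧ g • v = u))
    {L : ℤ → V} (hL : IsLine T L) {g : G} (hfix : ∀ v : V, g • v ≠ v)
    (hpre : PreservesLine g L) :
    ∃ k : ℤ, k ≠ 0 ∧ ∀ n : ℤ, g • L n = L (n + k) := by
  have hmem := range_mem_of_preserves hpre
  choose φ hφ using hmem
  -- hφ : ∀ n, L (φ n) = g • L n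
  have hφinj : Function.Injective φ := by
    intro a b hab
    have : g • L a = g • L b := by rw [← hφ, ← hφ, hab]
    exact hL.1 (smul_left_cancel g this)
  have hstep : ∀ n : ℤ, φ (n + 1) = φ n + 1 ∨ φ (n + 1) = φ n - 1 := by
    intro n
    have : T.Adj (L (φ n)) (L (φ (n + 1))) := by
      rw [hφ, hφ]; exact hadj g _ _ (hL.2 n)
    rcases adj_line hT hL this with h | h
    · exact Or.inl h
    · exact Or.inr h
  have hconst : ∀ n : ℤ, φ (n + 1) - φ n = φ 1 - φ 0 := by
    have key : ∀ m : ℤ, φ (m + 1 + 1) - φ (m + 1) = φ (m + 1) - φ m := by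
      intro m
      rcases hstep m with h1 | h1 <;> rcases hstep (m + 1) with h2 | h2
      · omega
      · exfalso; have : φ (m + 1 + 1) = φ m := by omega
        have := hφinj this; omega
      · exfalso; have : φ (m + 1 + 1) = φ m := by omega
        have := hφinj this; omega
      · omega
    intro n
    induction n using Int.induction_on with
    | zero => rfl
    | succ i ih =>
      have k1 := key (i : ℤ)
      ring_nf at k1 ih ⊢
      omega
    | pred i ih =>
      have k1 := key (-(i : ℤ) - 1)
      ring_nf at k1 ih ⊢
      omega
  set d := φ 1 - φ 0 with hd
  have hd1 : d = 1 ∨ d = -1 := by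
    have h := hstep 0
    norm_num at h
    simp only [hd]
    omega
  have hform : ∀ n : ℤ, φ n = φ 0 + d * n := by
    intro n
    induction n using Int.induction_on with
    | zero => ring
    | succ i ih =>
      have h1 := hconst (i : ℤ)
      ring_nf at h1 ih ⊢
      omega
    | pred i ih =>
      have h1 := hconst (-(i : ℤ) - 1)
      ring_nf at h1 ih ⊢
      omega
  rcases hd1 with hd1 | hd1
  · refine ⟨φ 0, ?_, ?_⟩
    · intro h0
      exact hfix (L 0) (by rw [← hφ 0, hform 0]; norm_num [h0])
    · intro n
      rw [← hφ n, hform n, hd1]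
      ring_nf
  · exfalso
    set c := φ 0 with hc
    rcases Int.even_or_odd c with ⟨t, ht⟩ | ⟨t, ht⟩
    · exact hfix (L t) (by rw [← hφ t, hform t, hd1]; congr 1; omega)
    · refine hninv g (L t) (L (t + 1)) (hL.2 t) ⟨?_, ?_⟩
      · rw [← hφ t, hform t, hd1]; congr 1; omega
      · rw [← hφ (t + 1), hform (t + 1), hd1]; congr 1; omega

/-- Entry point of a walk into the range of `L`: an initial path meeting
`Set.range L` only at its endpoint. -/
lemma exists_entry (L : ℤ → V) {p v : V} (W : T.Walk p v) (hv : v ∈ Set.range L) :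
    ∃ (a : ℤ) (A : T.Walk p (L a)), A.IsPath ∧
      ∀ x ∈ A.support, x ∈ Set.range L → x = L a := by
  classical
  suffices h : ∃ (a : ℤ) (A : T.Walk p (L a)),
      ∀ x ∈ A.support, x ∈ Set.range L → x = L a by
    obtain ⟨a, A, hA⟩ := h
    exact ⟨a, A.bypass, A.bypass_isPath, fun x hx => hA x (A.support_bypass_subset hx)⟩
  induction W with
  | nil =>
    obtain ⟨a, ha⟩ := hv
    refine ⟨a, Walk.nil.copy rfl ha.symm, ?_⟩
    intro x hx _
    simp only [support_copy, support_nil, List.mem_singleton] at hx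
    rw [hx, ← ha]
  | @cons p q r h W ih =>
    by_cases hp : p ∈ Set.range L
    · obtain ⟨a, ha⟩ := hp
      refine ⟨a, Walk.nil.copy rfl ha.symm, ?_⟩
      intro x hx _
      simp only [support_copy, support_nil, List.mem_singleton] at hx
      rw [hx, ← ha]
    · obtain ⟨a, A', hA'⟩ := ih hv
      refine ⟨a, Walk.cons h A', ?_⟩
      intro x hx hxL
      rw [support_cons, List.mem_cons] at hx
      rcases hx with rfl | hx
      · exact absurd hxL hp
      · exact hA' x hx hxL

/-- The composite path from `p` to `e • p` through the invariant line `L`: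
entry path, translation along the line, image of the reversed entry path. -/
lemma comp_len (hT : T.IsAcyclic)
    (hadj : ∀ (g : G) (u v : V), T.Adj u v → T.Adj (g • u) (g • v))
    {L : ℤ → V} (hL : IsLine T L)
    {e : G} {t : ℤ} (ht : 0 < t) (het : ∀ n : ℤ, e • L n = L (n + t))
    {p : V} {a : ℤ} (A : T.Walk p (L a)) (hA : A.IsPath)
    (hmeet : ∀ x ∈ A.support, x ∈ Set.range L → x = L a) :
    ∃ P : T.Walk p (e • p), P.IsPath ∧ P.length = A.length + t.toNat + A.length := by
  classical
  have hinvL : ∀ x ∈ Set.range L, e⁻¹ • x ∈ Set.range L := by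
    rintro x ⟨n, rfl⟩
    refine ⟨n - t, ?_⟩
    have h1 := het (n - t)
    rw [sub_add_cancel] at h1
    rw [← h1, inv_smul_smul]
  set B := seg L hL.2 a (a + t) with hB
  have hBlen : B.length = t.toNat := by rw [hB, seg_length]; omega
  have hBsup : ∀ x ∈ B.support, x ∈ Set.range L := seg_support L hL.2 a (a + t)
  have hBpath : B.IsPath := seg_isPath L hL.1 hL.2 a (a + t)
  have hea : ghom hadj e (L a) = L (a + t) := het a
  have hep : ghom hadj e p = e • p := rfl
  set C : T.Walk (L (a + t)) (e • p) := ((A.map (ghom hadj e)).copy hep hea).reverse with hC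
  have hCpath : C.IsPath :=
    ((isPath_copy _ _ _).2 (Walk.map_isPath_of_injective (MulAction.injective e) hA)).reverse
  have hCsup : ∀ x, x ∈ C.support ↔ ∃ w ∈ A.support, e • w = x := by
    intro x
    rw [hC, support_reverse, List.mem_reverse, support_copy, Walk.support_map]
    simp only [List.mem_map]
    rfl
  have hCmeet : ∀ x ∈ C.support, x ∈ Set.range L → x = L (a + t) := by
    intro x hx hxL
    obtain ⟨w, hw, rfl⟩ := (hCsup x).1 hx
    have hw2 : w ∈ Set.range L := by
      have := hinvL _ hxL
      rwa [inv_smul_smul] at this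
    rw [hmeet w hw hw2, het a]
  have hCLa : L a ∉ C.support := by
    intro hmem
    have := hCmeet _ hmem ⟨a, rfl⟩
    have := hL.1 this
    omega
  have hBC : (B.append C).IsPath :=
    isPath_append hBpath hCpath (fun x hx1 hx2 => hCmeet x hx2 (hBsup x hx1))
  have hjunction : ∀ x ∈ A.support, x ∈ (B.append C).support → x = L a := by
    intro x hxA hxBC
    rw [mem_support_append_iff] at hxBC
    rcases hxBC with hxB | hxC
    · exact hmeet x hxA (hBsup x hxB)
    · by_cases hxL : x ∈ Set.range L
      · exfalso
        have h1 := hmeet x hxA hxL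
        have h2 := hCmeet x hxC hxL
        rw [h1] at h2
        have := hL.1 h2
        omega
      · exfalso
        -- two distinct paths from x to L (a + t)
        set X : T.Walk x (L (a + t)) := (A.dropUntil x hxA).append B with hX
        have hXpath : X.IsPath :=
          isPath_append (hA.dropUntil hxA) hBpath
            (fun y hy1 hy2 => hmeet y (A.support_dropUntil_subset hxA hy1) (hBsup y hy2))
        set Y : T.Walk x (L (a + t)) := (C.takeUntil x hxC).reverse with hY
        have hYpath : Y.IsPath := (hCpath.takeUntil hxC).reverse
        have hXY : X = Y := path_eq hT hXpath hYpath
        have hLaX : L a ∈ X.support := by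
          rw [hX]
          exact Walk.subset_support_append_right _ _ B.start_mem_support
        rw [hXY, hY, support_reverse, List.mem_reverse] at hLaX
        exact hCLa (C.support_takeUntil_subset hxC hLaX)
  refine ⟨A.append (B.append C), isPath_append hA hBC hjunction, ?_⟩
  rw [length_append, length_append, hBlen, hC]
  simp only [length_reverse, length_copy, Walk.length_map]
  omega

/-- Core lemma: every point of a second invariant line lies on the first. -/
lemma mem_range_core (hT : T.IsTree)
    (hadj : ∀ (g : G) (u v : V), T.Adj u v → T.Adj (g • u) (g • v))
    {g : G} {L L' : ℤ → V} (hL : IsLine T L) (hL' : IsLine T L')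
    {k k' : ℤ} (hk : 0 < k) (htr : ∀ n : ℤ, g • L n = L (n + k))
    (htr' : ∀ n : ℤ, g • L' n = L' (n + k')) (j : ℤ) : L' j ∈ Set.range L := by
  obtain ⟨W⟩ := hT.1.preconnected (L' j) (L 0)
  obtain ⟨a, A, hA, hmeet⟩ := exists_entry L W ⟨0, rfl⟩
  obtain ⟨P1, hP1, hP1len⟩ := comp_len hT.2 hadj hL hk htr A hA hmeet
  have he1 : g • L' j = L' (j + k') := htr' j
  have hQ1path : ((seg L' hL'.2 j (j + k')).copy rfl he1.symm).IsPath :=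
    (isPath_copy _ _ _).2 (seg_isPath L' hL'.1 hL'.2 j (j + k'))
  have eq1 : A.length + k.toNat + A.length = k'.natAbs := by
    have := path_eq hT.2 hP1 hQ1path
    have hlen := congrArg Walk.length this
    rw [hP1len, length_copy, seg_length] at hlen
    rw [hlen]
    congr 1
    omega
  have htr2 : ∀ n : ℤ, (g * g) • L n = L (n + (k + k)) := by
    intro n
    rw [mul_smul, htr, htr]
    congr 1
    ring
  have htr2' : (g * g) • L' j = L' (j + (k' + k')) := by
    rw [mul_smul, htr', htr']
    congr 1
    ring
  obtain ⟨P2, hP2, hP2len⟩ := comp_len hT.2 hadj hL (by omega) htr2 A hA hmeet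
  have hQ2path : ((seg L' hL'.2 j (j + (k' + k'))).copy rfl htr2'.symm).IsPath :=
    (isPath_copy _ _ _).2 (seg_isPath L' hL'.1 hL'.2 j (j + (k' + k')))
  have eq2 : A.length + (k + k).toNat + A.length = (k' + k').natAbs := by
    have := path_eq hT.2 hP2 hQ2path
    have hlen := congrArg Walk.length this
    rw [hP2len, length_copy, seg_length] at hlen
    rw [hlen]
    congr 1
    omega
  have h1 : (k + k).toNat = k.toNat + k.toNat := by omega
  have h2 : (k' + k').natAbs = k'.natAbs + k'.natAbs := by omega
  have hm : A.length = 0 := by omega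
  exact ⟨a, (Walk.eq_of_length_eq_zero hm).symm⟩

/-- If a fixed-point-free, non-inverting element preserves two lines, the
second is contained in the first. -/
lemma range_subset (hT : T.IsTree)
    (hadj : ∀ (g : G) (u v : V), T.Adj u v → T.Adj (g • u) (g • v))
    (hninv : ∀ (g : G) (u v : V), T.Adj u v → ¬(g • u = v ∧ g • v = u))
    {g : G} (hfix : ∀ v : V, g • v ≠ v)
    {L L' : ℤ → V} (hL : IsLine T L) (hL' : IsLine T L')
    (hg : PreservesLine g L) (hg' : PreservesLine g L') :
    Set.range L' ⊆ Set.range L := by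
  obtain ⟨k, hk0, htr⟩ := exists_translation hT.2 hadj hninv hL hfix hg
  obtain ⟨k', hk'0, htr'⟩ := exists_translation hT.2 hadj hninv hL' hfix hg'
  rintro x ⟨j, rfl⟩
  rcases hk0.lt_or_gt with h | h
  · have htri : ∀ n : ℤ, g⁻¹ • L n = L (n + -k) := by
      intro n
      have h1 := htr (n + -k)
      rw [show n + -k + k = n by ring] at h1
      rw [← h1, inv_smul_smul]
    have htri' : ∀ n : ℤ, g⁻¹ • L' n = L' (n + -k') := by
      intro n
      have h1 := htr' (n + -k')
      rw [show n + -k' + k' = n by ring] at h1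
      rw [← h1, inv_smul_smul]
    exact mem_range_core hT hadj hL hL' (by omega) htri htri' j
  · exact mem_range_core hT hadj hL hL' h htr htr' j

lemma range_eq (hT : T.IsTree)
    (hadj : ∀ (g : G) (u v : V), T.Adj u v → T.Adj (g • u) (g • v))
    (hninv : ∀ (g : G) (u v : V), T.Adj u v → ¬(g • u = v ∧ g • v = u))
    {g : G} (hfix : ∀ v : V, g • v ≠ v)
    {L L' : ℤ → V} (hL : IsLine T L) (hL' : IsLine T L')
    (hg : PreservesLine g L) (hg' : PreservesLine g L') :
    Set.range L = Set.range L' :=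
  Set.Subset.antisymm (range_subset hT hadj hninv hfix hL' hL hg' hg)
    (range_subset hT hadj hninv hfix hL hL' hg hg')

lemma preservesLine_congr {g : G} {L L' : ℤ → V} (h : Set.range L = Set.range L') :
    PreservesLine g L ↔ PreservesLine g L' := by
  unfold PreservesLine
  rw [h]

end StmtSix

theorem stmt6 {V : Type*} (T : SimpleGraph V) (hT : T.IsTree)
    {G : Type*} [Group G] [MulAction G V]
    (hadj : ∀ (g : G) (u v : V), T.Adj u v → T.Adj (g • u) (g • v))
    (hninv : ∀ (g : G) (u v : V), T.Adj u v → ¬(g • u = v ∧ g • v = u))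
    {ι : Type*} (Γ : SimpleGraph ι) (hΓ : Γ.Connected)
    (Wf : ι → Subgroup G)
    (hhyp : ∀ i, ∃ g ∈ Wf i, ∀ v : V, g • v ≠ v)
    (hlines : ∀ i, ∃ L : ℤ → V, IsLine T L ∧ ∀ g ∈ Wf i, PreservesLine g L)
    (hadjpair : ∀ i j, Γ.Adj i j → ∃ L : ℤ → V, IsLine T L ∧
      (∀ g ∈ Wf i, PreservesLine g L) ∧ (∀ g ∈ Wf j, PreservesLine g L)) :
    ∃ L : ℤ → V, IsLine T L ∧ (∀ i, ∀ g ∈ Wf i, PreservesLine g L) ∧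
      ∀ g ∈ ⨆ i, Wf i, PreservesLine g L := by
  classical
  obtain ⟨i₀⟩ := hΓ.nonempty
  choose ℓ hℓ using hlines
  have hedge : ∀ i j, Γ.Adj i j → Set.range (ℓ i) = Set.range (ℓ j) := by
    intro i j hij
    obtain ⟨M, hM, hMi, hMj⟩ := hadjpair i j hij
    obtain ⟨gi, hgi, hgifix⟩ := hhyp i
    obtain ⟨gj, hgj, hgjfix⟩ := hhyp j
    have h1 : Set.range (ℓ i) = Set.range M :=
      StmtSix.range_eq hT hadj hninv hgifix (hℓ i).1 hM ((hℓ i).2 gi hgi) (hMi gi hgi)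
    have h2 : Set.range (ℓ j) = Set.range M :=
      StmtSix.range_eq hT hadj hninv hgjfix (hℓ j).1 hM ((hℓ j).2 gj hgj) (hMj gj hgj)
    rw [h1, h2]
  have hwalk : ∀ {i j : ι}, Γ.Walk i j → Set.range (ℓ i) = Set.range (ℓ j) := by
    intro i j W
    induction W with
    | nil => rfl
    | cons h _ ih => exact (hedge _ _ h).trans ih
  set L₀ := ℓ i₀ with hL₀
  have hall : ∀ i, ∀ g ∈ Wf i, PreservesLine g L₀ := by
    intro i g hg
    obtain ⟨W⟩ := hΓ.preconnected i i₀
    exact (StmtSix.preservesLine_congr (hwalk W)).1 ((hℓ i).2 g hg)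
  refine ⟨L₀, (hℓ i₀).1, hall, ?_⟩
  have hone : PreservesLine (1 : G) L₀ := by
    unfold PreservesLine
    simp
  have hmul : ∀ a b : G, PreservesLine a L₀ → PreservesLine b L₀ →
      PreservesLine (a * b) L₀ := by
    intro a b ha hb
    unfold PreservesLine at *
    rw [show ((a * b) • · : V → V) = (a • ·) ∘ (b • ·) from funext fun x => mul_smul a b x,
      Set.image_comp, hb, ha]
  have hinv : ∀ a : G, PreservesLine a L₀ → PreservesLine a⁻¹ L₀ := by
    intro a ha
    unfold PreservesLine at *
    conv_lhs => rw [← ha]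
    rw [← Set.image_comp]
    simp [Function.comp_def]
  set H : Subgroup G :=
    { carrier := {g : G | PreservesLine g L₀}
      one_mem' := hone
      mul_mem' := fun ha hb => hmul _ _ ha hb
      inv_mem' := fun ha => hinv _ ha } with hH
  have hle : (⨆ i, Wf i) ≤ H := iSup_le fun i g hg => hall i g hg
  exact fun g hg => hle hg
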